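/- Let N ∈ ℕ, λ₀ ∈ ℂ with λ₀ ≠ 0, α > 0 a real number, w ∈ ℂ^N with w ≠ 0, and let u : ℕ → ℂ^N be a sequence such that k·‖λ₀^k·k^α·u_k − w‖ → 0 as k → ∞. Then ⟨u_{k+1}, u_k⟩ ≠ 0 for all sufficiently large k, and k·(⟨u_k,u_k⟩/⟨u_{k+1},u_k⟩ − λ₀) → α·λ₀ as k → ∞, where ⟨·,·⟩ is the standard Hermitian inner product on ℂ^N. -/

import Mathlib

set_option maxHeartbeats 1000000
open Filter Complex

/-- The standard Hermitian inner product on `ℂ^N` (linear in the first argument,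
conjugate-linear in the second). -/
noncomputable def hinner {N : ℕ} (x y : Fin N → ℂ) : ℂ :=
  ∑ i, x i * (starRingEnd ℂ) (y i)

lemma hinner_expand2 {N : ℕ} (x y z : Fin N → ℂ) :
    hinner x z - hinner y y = hinner (x - y) z + hinner y (z - y) := by
  simp only [hinner, ← Finset.sum_add_distrib, ← Finset.sum_sub_distrib]
  refine Finset.sum_congr rfl fun i _ => ?_
  simp only [Pi.sub_apply, map_sub]
  ring

lemma hinner_norm_le {N : ℕ} (x y : Fin N → ℂ) : ‖hinner x y‖ ≤ N * ‖x‖ * ‖y‖ := by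
  refine (norm_sum_le _ _).trans ?_
  have h : ∀ i : Fin N, ‖x i * (starRingEnd ℂ) (y i)‖ ≤ ‖x‖ * ‖y‖ := fun i => by
    rw [norm_mul, RCLike.norm_conj]
    exact mul_le_mul (norm_le_pi_norm x i) (norm_le_pi_norm y i) (norm_nonneg _) (norm_nonneg _)
  calc ∑ i, ‖x i * (starRingEnd ℂ) (y i)‖ ≤ ∑ _i : Fin N, ‖x‖ * ‖y‖ :=
        Finset.sum_le_sum fun i _ => h i
    _ = N * ‖x‖ * ‖y‖ := by simp [Finset.sum_const, mul_assoc]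

lemma hinner_smul {N : ℕ} (c d : ℂ) (x y : Fin N → ℂ) :
    hinner (c • x) (d • y) = (c * (starRingEnd ℂ) d) * hinner x y := by
  simp only [hinner, Finset.mul_sum, Pi.smul_apply, smul_eq_mul, map_mul]
  exact Finset.sum_congr rfl fun i _ => by ring

lemma hinner_self_ne {N : ℕ} (w : Fin N → ℂ) (hw : w ≠ 0) : hinner w w ≠ 0 := by
  have h : hinner w w = ((∑ i, Complex.normSq (w i) : ℝ) : ℂ) := by
    simp [hinner, Complex.mul_conj]
  rw [h, Complex.ofReal_ne_zero]
  obtain ⟨i, hi⟩ := Function.ne_iff.mp hw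
  exact ne_of_gt (Finset.sum_pos' (fun j _ => Complex.normSq_nonneg _)
      ⟨i, Finset.mem_univ i, Complex.normSq_pos.mpr hi⟩)

lemma nat_rpow_limit (α : ℝ) : Tendsto (fun k : ℕ => (k : ℝ) * ((1 + 1/(k:ℝ)) ^ α - 1))
    atTop (nhds α) := by
  have hd : HasDerivAt (fun x : ℝ => x ^ α) (α * (1:ℝ) ^ (α - 1)) 1 :=
    Real.hasDerivAt_rpow_const (Or.inl one_ne_zero)
  rw [Real.one_rpow, mul_one] at hd
  have hslope := hasDerivAt_iff_tendsto_slope.mp hd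
  have hs : Tendsto (fun k : ℕ => 1 + 1/(k:ℝ)) atTop (nhdsWithin 1 {(1:ℝ)}ᶜ) := by
    rw [tendsto_nhdsWithin_iff]
    constructor
    · have : Tendsto (fun n : ℕ => 1 / (n:ℝ)) atTop (nhds 0) := tendsto_one_div_atTop_nhds_zero_nat
      simpa using (tendsto_const_nhds (x := (1:ℝ)) (f := atTop)).add this
    · filter_upwards [eventually_gt_atTop 0] with k hk
      have h0 : (0:ℝ) < 1/(k:ℝ) := by positivity
      simp only [Set.mem_compl_iff, Set.mem_singleton_iff]
      intro h; nlinarith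
  refine (hslope.comp hs).congr' ?_
  filter_upwards [eventually_gt_atTop 0] with k hk
  have hk0 : (k:ℝ) ≠ 0 := by positivity
  simp only [Function.comp, slope_def_field]
  rw [Real.one_rpow]
  field_simp
  ring

lemma aux_ratio (r μ a q X Y : ℂ) (hrμ : r * μ ≠ 0) (haq : a * q ≠ 0) :
    r * μ * ((a * q * X) / (r * μ * a * q * Y)) = X / Y := by
  rw [show r * μ * a * q * Y = (a * q) * (r * μ * Y) by ring,
    show a * q * X = (a * q) * X by ring, mul_div_mul_left _ _ haq,
    show r * μ * (X / (r * μ * Y)) = (r * μ * X) / (r * μ * Y) by rw [mul_div_assoc],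
    mul_div_mul_left _ _ hrμ]

lemma aux_final (μ r kc A B : ℂ) (hB : B ≠ 0) :
    μ * (kc * (r - 1) * (A / B)) + μ * (kc * (A - B) * B⁻¹) = kc * (r * μ * (A / B) - μ) := by
  field_simp
  ring

/-- If a sequence satisfies the pointwise asymptotics `u_k ≈ λ₀^{-k}·k^{-α}·w`
(with relative error `o(1/k)`), then the approximate spectral values
`λ_{0,k} = ⟨u_k,u_k⟩/⟨u_{k+1},u_k⟩` satisfy `k·(λ_{0,k} − λ₀) → α·λ₀`. -/
theorem approx_spectral_value_branch_point_asymptotics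
    (N : ℕ) (μ₀ : ℂ) (hμ₀ : μ₀ ≠ 0) (α : ℝ) (hα : 0 < α)
    (w : Fin N → ℂ) (hw : w ≠ 0) (u : ℕ → Fin N → ℂ)
    (hasy : Tendsto
      (fun k : ℕ => (k : ℝ) * ‖((((k : ℝ) ^ α : ℝ) : ℂ) * μ₀ ^ k) • u k - w‖)
      atTop (nhds 0)) :
    (∃ K : ℕ, ∀ k ≥ K, hinner (u (k + 1)) (u k) ≠ 0) ∧
    Tendsto
      (fun k : ℕ =>
        (k : ℂ) * (hinner (u k) (u k) / hinner (u (k + 1)) (u k) - μ₀))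
      atTop (nhds ((α : ℂ) * μ₀)) := by
  classical
  set c : ℕ → ℂ := fun k => (((k : ℝ) ^ α : ℝ) : ℂ) * μ₀ ^ k with hcdef
  set v : ℕ → Fin N → ℂ := fun k => c k • u k with hvdef
  have hasy' : Tendsto (fun k : ℕ => (k : ℝ) * ‖v k - w‖) atTop (nhds 0) := by
    simp only [hvdef, hcdef]; exact hasy
  have hW : hinner w w ≠ 0 := hinner_self_ne w hw
  -- v k → w
  have hvw : Tendsto (fun k : ℕ => ‖v k - w‖) atTop (nhds 0) := by
    refine squeeze_zero' (Eventually.of_forall fun k => norm_nonneg _) ?_ hasy'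
    filter_upwards [eventually_ge_atTop 1] with k hk
    have : (1:ℝ) ≤ (k:ℝ) := by exact_mod_cast hk
    nlinarith [norm_nonneg (v k - w)]
  have h2 : Tendsto v atTop (nhds w) := tendsto_iff_norm_sub_tendsto_zero.mpr hvw
  have h2' : Tendsto (fun k => v (k+1)) atTop (nhds w) := h2.comp (tendsto_add_atTop_nat 1)
  have hvi : ∀ i, Tendsto (fun k => v k i) atTop (nhds (w i)) := fun i => (tendsto_pi_nhds.mp h2) i
  have hvi' : ∀ i, Tendsto (fun k => v (k+1) i) atTop (nhds (w i)) := fun i => (tendsto_pi_nhds.mp h2') i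
  have hA : Tendsto (fun k => hinner (v k) (v k)) atTop (nhds (hinner w w)) := by
    unfold hinner
    refine tendsto_finset_sum _ fun i _ => ?_
    exact (hvi i).mul ((Complex.continuous_conj.tendsto (w i)).comp (hvi i))
  have hB : Tendsto (fun k => hinner (v (k+1)) (v k)) atTop (nhds (hinner w w)) := by
    unfold hinner
    refine tendsto_finset_sum _ fun i _ => ?_
    exact (hvi' i).mul ((Complex.continuous_conj.tendsto (w i)).comp (hvi i))
  -- k * (A - W) → 0
  have hkA : Tendsto (fun k : ℕ => (k:ℂ) * (hinner (v k) (v k) - hinner w w)) atTop (nhds 0) := by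
    rw [tendsto_zero_iff_norm_tendsto_zero]
    have hL : Tendsto (fun k : ℕ => ((k:ℝ) * ‖v k - w‖) * ((N:ℝ) * (‖v k‖ + ‖w‖)))
        atTop (nhds 0) := by
      have := hasy'.mul (tendsto_const_nhds.mul (h2.norm.add (tendsto_const_nhds
        (x := ‖w‖) (f := atTop))) : Tendsto (fun k : ℕ => (N:ℝ) * (‖v k‖ + ‖w‖)) atTop _)
      simpa using this
    refine squeeze_zero (fun k => norm_nonneg _) (fun k => ?_) hL
    rw [norm_mul, Complex.norm_natCast, hinner_expand2]
    have hb := (norm_add_le (hinner (v k - w) (v k)) (hinner w (v k - w))).trans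
      (add_le_add (hinner_norm_le _ _) (hinner_norm_le _ _))
    have hk0 : (0:ℝ) ≤ (k:ℝ) := Nat.cast_nonneg k
    nlinarith [norm_nonneg (v k - w), norm_nonneg (v k), norm_nonneg w]
  -- k * (B - W) → 0
  have hkB : Tendsto (fun k : ℕ => (k:ℂ) * (hinner (v (k+1)) (v k) - hinner w w)) atTop (nhds 0) := by
    rw [tendsto_zero_iff_norm_tendsto_zero]
    have hasy'' : Tendsto (fun k : ℕ => ((k:ℝ)+1) * ‖v (k+1) - w‖) atTop (nhds 0) := by
      have := hasy'.comp (tendsto_add_atTop_nat 1)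
      refine this.congr fun k => ?_
      simp only [Function.comp]
      push_cast
      ring
    have hL : Tendsto (fun k : ℕ => (((k:ℝ)+1) * ‖v (k+1) - w‖) * ((N:ℝ) * ‖v k‖)
        + ((k:ℝ) * ‖v k - w‖) * ((N:ℝ) * ‖w‖)) atTop (nhds 0) := by
      have t1 := hasy''.mul (tendsto_const_nhds.mul h2.norm :
        Tendsto (fun k : ℕ => (N:ℝ) * ‖v k‖) atTop _)
      have t2 := hasy'.mul (tendsto_const_nhds :
        Tendsto (fun _ : ℕ => (N:ℝ) * ‖w‖) atTop _)
      simpa using t1.add t2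
    refine squeeze_zero (fun k => norm_nonneg _) (fun k => ?_) hL
    rw [norm_mul, Complex.norm_natCast, hinner_expand2]
    have hb := (norm_add_le (hinner (v (k+1) - w) (v k)) (hinner w (v k - w))).trans
      (add_le_add (hinner_norm_le _ _) (hinner_norm_le _ _))
    have hk0 : (0:ℝ) ≤ (k:ℝ) := Nat.cast_nonneg k
    have h1 := mul_le_mul_of_nonneg_left hb hk0
    have h2 : (0:ℝ) ≤ (N:ℝ) * ‖v (k+1) - w‖ * ‖v k‖ := by positivity
    nlinarith [h1, h2]
  have hkAB : Tendsto (fun k : ℕ =>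
      (k:ℂ) * (hinner (v k) (v k) - hinner (v (k+1)) (v k))) atTop (nhds 0) := by
    have h := hkA.sub hkB
    rw [sub_self] at h
    exact h.congr fun k => by ring
  have hBne : ∀ᶠ k in atTop, hinner (v (k+1)) (v k) ≠ 0 := hB.eventually_ne hW
  have hcne : ∀ k : ℕ, 1 ≤ k → c k ≠ 0 := by
    intro k hk
    have hkpos : (0:ℝ) < (k:ℝ) := by exact_mod_cast hk
    exact mul_ne_zero (Complex.ofReal_ne_zero.mpr (ne_of_gt (Real.rpow_pos_of_pos hkpos α)))
      (pow_ne_zero _ hμ₀)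
  have hsmul : ∀ j k : ℕ, hinner (v j) (v k) =
      (c j * (starRingEnd ℂ) (c k)) * hinner (u j) (u k) := fun j k =>
    hinner_smul (c j) (c k) (u j) (u k)
  obtain ⟨K, hK⟩ := eventually_atTop.mp hBne
  constructor
  · refine ⟨max K 1, fun k hk => ?_⟩
    have hB0 := hK k (le_trans (le_max_left _ _) hk)
    have hck := hcne k (le_trans (le_max_right _ _) hk)
    intro h0
    apply hB0
    rw [hsmul (k+1) k, h0, mul_zero]
  -- the limit
  · have hr : Tendsto (fun k : ℕ =>
        (k:ℂ) * (((((k:ℝ)+1) ^ α / (k:ℝ) ^ α : ℝ) : ℂ) - 1)) atTop (nhds (α:ℂ)) := by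
      have h := (Complex.continuous_ofReal.tendsto α).comp (nat_rpow_limit α)
      refine h.congr' ?_
      filter_upwards [eventually_ge_atTop 1] with k hk
      have hk0 : (0:ℝ) < (k:ℝ) := by exact_mod_cast hk
      have hq : ((k:ℝ)+1) ^ α / (k:ℝ) ^ α = (1 + 1/(k:ℝ)) ^ α := by
        rw [← Real.div_rpow (by positivity) (le_of_lt hk0)]
        congr 1
        field_simp
      simp only [Function.comp]
      rw [hq]
      push_cast
      ring
    have hABlim : Tendsto (fun k => hinner (v k) (v k) / hinner (v (k+1)) (v k))
        atTop (nhds 1) := by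
      have : Tendsto (fun k => hinner (v k) (v k) / hinner (v (k+1)) (v k)) atTop
          (nhds (hinner w w / hinner w w)) := hA.div hB hW
      simpa [div_self hW] using this
    have hsecond : Tendsto (fun k : ℕ =>
        (k:ℂ) * (hinner (v k) (v k) - hinner (v (k+1)) (v k)) * (hinner (v (k+1)) (v k))⁻¹)
        atTop (nhds 0) := by
      simpa using hkAB.mul (hB.inv₀ hW)
    have hmain : Tendsto (fun k : ℕ =>
        μ₀ * ((k:ℂ) * (((((k:ℝ)+1) ^ α / (k:ℝ) ^ α : ℝ) : ℂ) - 1)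
            * (hinner (v k) (v k) / hinner (v (k+1)) (v k)))
        + μ₀ * ((k:ℂ) * (hinner (v k) (v k) - hinner (v (k+1)) (v k))
            * (hinner (v (k+1)) (v k))⁻¹)) atTop (nhds ((α:ℂ) * μ₀)) := by
      rw [show (α:ℂ) * μ₀ = μ₀ * ((α:ℂ) * 1) + μ₀ * 0 by ring]
      exact ((tendsto_const_nhds (x := μ₀)).mul (hr.mul hABlim)).add
        ((tendsto_const_nhds (x := μ₀)).mul hsecond)
    refine hmain.congr' ?_
    filter_upwards [hBne, eventually_ge_atTop 1] with k hBk hk1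
    have hk0 : (0:ℝ) < (k:ℝ) := by exact_mod_cast hk1
    have hck := hcne k hk1
    have hck1 := hcne (k+1) (by omega)
    have hqne : (starRingEnd ℂ) (c k) ≠ 0 := by
      simpa using hck
    have hrne : ((((k:ℝ)+1) ^ α / (k:ℝ) ^ α : ℝ) : ℂ) ≠ 0 := by
      rw [Complex.ofReal_ne_zero]
      exact ne_of_gt (div_pos (Real.rpow_pos_of_pos (by positivity) α)
        (Real.rpow_pos_of_pos hk0 α))
    have hY : hinner (u (k+1)) (u k) ≠ 0 := by
      intro h0
      apply hBk
      rw [hsmul (k+1) k, h0, mul_zero]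
    have hcc : c (k+1) = ((((k:ℝ)+1) ^ α / (k:ℝ) ^ α : ℝ) : ℂ) * μ₀ * c k := by
      have hkα : (((k:ℝ) ^ α : ℝ) : ℂ) ≠ 0 :=
        Complex.ofReal_ne_zero.mpr (ne_of_gt (Real.rpow_pos_of_pos hk0 α))
      simp only [hcdef]
      push_cast
      rw [pow_succ]
      field_simp
    have ekey : hinner (u k) (u k) / hinner (u (k+1)) (u k) =
        ((((k:ℝ)+1) ^ α / (k:ℝ) ^ α : ℝ) : ℂ) * μ₀ *
          (hinner (v k) (v k) / hinner (v (k+1)) (v k)) := by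
      rw [hsmul k k, hsmul (k+1) k, hcc]
      exact (aux_ratio _ _ _ _ _ _ (mul_ne_zero hrne hμ₀) (mul_ne_zero hck hqne)).symm
    rw [ekey]
    exact aux_final μ₀ _ (k:ℂ) _ _ hBk
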